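/- The alternating group Alt_11 is not (a,b,c)-generated for any of the following triples: (2,3,c) with c ≥ 7 and c not divisible by 11; (2,4,5); and (3,3,4). That is, for each such triple (a,b,c) there do not exist permutations x, y ∈ Alt_11 with x^a = y^b = (xy)^c = 1 which generate Alt_11; equivalently, Alt_11 is not a quotient of the triangle group T_{a,b,c} for these triples. -/

import Mathlib

set_option maxRecDepth 8000

namespace Alt11NotGen

open Equiv Equiv.Perm LinearMap Module

abbrev V11 : Type := Fin 11 → ℚ

/-- The permutation representation of `Perm (Fin 11)` on `ℚ^11`. -/
def Pm (σ : Equiv.Perm (Fin 11)) : V11 →ₗ[ℚ] V11 where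
  toFun v := v ∘ ⇑σ⁻¹
  map_add' _ _ := rfl
  map_smul' _ _ := rfl

lemma Pm_mul (x y : Equiv.Perm (Fin 11)) : Pm (x * y) = Pm x ∘ₗ Pm y := by
  ext v i
  simp [Pm]

/-- Number of orbits of a permutation of `Fin 11`. -/
def tOrb (σ : Equiv.Perm (Fin 11)) : ℕ := Multiset.card σ.cycleType + (11 - σ.support.card)

lemma linIndep_eval {ι : Type*} [Fintype ι] [DecidableEq ι] (v : ι → V11) (p : ι → Fin 11)
    (h1 : ∀ i, v i (p i) = 1) (h0 : ∀ i j, i ≠ j → v i (p j) = 0) :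
    LinearIndependent ℚ v := by
  rw [Fintype.linearIndependent_iff]
  intro c hc j
  have hc' := congrFun hc (p j)
  rw [Finset.sum_apply] at hc'
  rw [Finset.sum_eq_single j (fun i _ hij => by simp [h0 i j hij])
    (by simp)] at hc'
  simpa [h1 j] using hc'

noncomputable def repPt (c : Equiv.Perm (Fin 11)) : Fin 11 :=
  if h : c.support.Nonempty then c.support.min' h else 0

noncomputable def repSet (σ : Equiv.Perm (Fin 11)) : Finset (Fin 11) :=
  σ.supportᶜ ∪ σ.cycleFactorsFinset.image repPt

lemma repPt_mem {σ c : Equiv.Perm (Fin 11)} (hc : c ∈ σ.cycleFactorsFinset) :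
    repPt c ∈ c.support := by
  have h : c.support.Nonempty :=
    ((Equiv.Perm.mem_cycleFactorsFinset_iff.mp hc).1).nonempty_support
  rw [repPt, dif_pos h]
  exact c.support.min'_mem h

lemma repSet_card (σ : Equiv.Perm (Fin 11)) : (repSet σ).card = tOrb σ := by
  have hinj : Set.InjOn repPt σ.cycleFactorsFinset := by
    intro c hc c' hc' h
    have h1 := repPt_mem hc
    have h2 := repPt_mem hc'
    rw [h] at h1
    exact (Equiv.Perm.cycle_is_cycleOf h1 hc).trans (Equiv.Perm.cycle_is_cycleOf h2 hc').symm
  have hdisj : Disjoint σ.supportᶜ (σ.cycleFactorsFinset.image repPt) := by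
    rw [Finset.disjoint_right]
    intro a ha
    obtain ⟨c, hc, rfl⟩ := Finset.mem_image.mp ha
    have : repPt c ∈ σ.support :=
      Equiv.Perm.mem_cycleFactorsFinset_support_le hc (repPt_mem hc)
    simpa using this
  rw [repSet, Finset.card_union_of_disjoint hdisj, Finset.card_image_of_injOn hinj,
    Finset.card_compl, tOrb]
  have : Multiset.card σ.cycleType = σ.cycleFactorsFinset.card := by
    simp [Equiv.Perm.cycleType]
  simp [this, Fintype.card_fin]
  omega

noncomputable def uVec (σ : Equiv.Perm (Fin 11)) (a : Fin 11) : V11 :=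
  fun i => @ite _ (σ.SameCycle a i) (Classical.propDecidable _) 1 0

lemma uVec_mem_ker (σ : Equiv.Perm (Fin 11)) (a : Fin 11) :
    uVec σ a ∈ ker (Pm σ - LinearMap.id) := by
  have key : ∀ i, uVec σ a (σ⁻¹ i) = uVec σ a i := by
    intro i
    have h : σ.SameCycle a (σ⁻¹ i) = σ.SameCycle a i :=
      propext (by rw [← Equiv.Perm.sameCycle_apply_right, ← Equiv.Perm.mul_apply, mul_inv_cancel, Equiv.Perm.one_apply])
    unfold uVec
    rw [h]
  rw [LinearMap.mem_ker]
  ext i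
  rw [LinearMap.sub_apply, LinearMap.id_apply, Pi.sub_apply, Pi.zero_apply]
  have hp : Pm σ (uVec σ a) i = uVec σ a (σ⁻¹ i) := rfl
  rw [hp, key i, sub_self]

lemma not_sameCycle_of_mem_repSet {σ : Equiv.Perm (Fin 11)} {a b : Fin 11}
    (ha : a ∈ repSet σ) (hb : b ∈ repSet σ) (hab : a ≠ b) : ¬ σ.SameCycle a b := by
  intro hsc
  rw [repSet, Finset.mem_union] at ha hb
  have fixcase : ∀ x y : Fin 11, x ∈ σ.supportᶜ → σ.SameCycle x y → y = x := by
    intro x y hx ⟨k, hk⟩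
    have hfix : σ x = x := Equiv.Perm.notMem_support.mp (Finset.mem_compl.mp hx)
    rw [← hk, Equiv.Perm.zpow_apply_eq_self_of_apply_eq_self hfix]
  rcases ha with ha | ha
  · exact hab (fixcase a b ha hsc).symm
  · rcases hb with hb | hb
    · exact hab (fixcase b a hb hsc.symm)
    · obtain ⟨c, hc, rfl⟩ := Finset.mem_image.mp ha
      obtain ⟨c', hc', rfl⟩ := Finset.mem_image.mp hb
      have e1 := Equiv.Perm.cycle_is_cycleOf (repPt_mem hc) hc
      have e2 := Equiv.Perm.cycle_is_cycleOf (repPt_mem hc') hc'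
      have : c = c' := by rw [e1, e2, hsc.cycleOf_eq]
      exact hab (by rw [this])

lemma finrank_ker_ge (σ : Equiv.Perm (Fin 11)) :
    tOrb σ ≤ finrank ℚ ↥(ker (Pm σ - LinearMap.id)) := by
  classical
  have hli : LinearIndependent ℚ (fun r : ↥(repSet σ) => uVec σ r) := by
    apply linIndep_eval _ (fun r : ↥(repSet σ) => (r : Fin 11))
    · intro i
      rw [uVec, if_pos (Equiv.Perm.SameCycle.refl _ _)]
    · intro i j hij
      have hne : (i : Fin 11) ≠ (j : Fin 11) := fun h => hij (Subtype.ext h)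
      have := not_sameCycle_of_mem_repSet i.2 j.2 hne
      simp [uVec, this]
  have hspan : Submodule.span ℚ (Set.range (fun r : ↥(repSet σ) => uVec σ r))
      ≤ ker (Pm σ - LinearMap.id) := by
    rw [Submodule.span_le]
    rintro _ ⟨r, rfl⟩
    exact uVec_mem_ker σ r
  calc tOrb σ = (repSet σ).card := (repSet_card σ).symm
    _ = Fintype.card ↥(repSet σ) := (Fintype.card_coe _).symm
    _ = finrank ℚ ↥(Submodule.span ℚ (Set.range (fun r : ↥(repSet σ) => uVec σ r))) :=
        (finrank_span_eq_card hli).symm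
    _ ≤ _ := Submodule.finrank_mono hspan

lemma finrank_range_le (σ : Equiv.Perm (Fin 11)) :
    finrank ℚ ↥(range (Pm σ - LinearMap.id)) + tOrb σ ≤ 11 := by
  have h := (Pm σ - LinearMap.id).finrank_range_add_finrank_ker
  rw [Module.finrank_fin_fun] at h
  have := finrank_ker_ge σ
  omega

/-- Scott's inequality. -/
lemma scott_ineq {V : Type*} [AddCommGroup V] [Module ℚ V] [FiniteDimensional ℚ V]
    (Px Py : V →ₗ[ℚ] V) :
    finrank ℚ V +
      finrank ℚ ↥(range (Px - LinearMap.id) ⊔ range (Py - LinearMap.id)) ≤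
    finrank ℚ ↥(ker (Px - LinearMap.id) ⊓ ker (Py - LinearMap.id)) +
      finrank ℚ ↥(range (Px - LinearMap.id)) + finrank ℚ ↥(range (Py - LinearMap.id)) +
      finrank ℚ ↥(range (Px ∘ₗ Py - LinearMap.id)) := by
  set A := Px - LinearMap.id with hA
  set B := Py - LinearMap.id with hB
  set C := Px ∘ₗ Py - LinearMap.id with hC
  set φ : V →ₗ[ℚ] ↥(range A) × ↥(range B) := (A.rangeRestrict).prod (B.rangeRestrict) with hφ
  set ψ : (↥(range A) × ↥(range B)) →ₗ[ℚ] V :=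
    ((range A).subtype).coprod (Px ∘ₗ (range B).subtype) with hψ
  have hψφ : ψ ∘ₗ φ = C := by
    ext v
    simp [hφ, hψ, hA, hB, hC, LinearMap.sub_apply, coprod_apply]
  have hkerφ : ker φ = ker A ⊓ ker B := by
    rw [hφ, ker_prod, ker_rangeRestrict, ker_rangeRestrict]
  have h1 : finrank ℚ ↥(range φ) + finrank ℚ ↥(ker A ⊓ ker B) = finrank ℚ V := by
    rw [← hkerφ]; exact φ.finrank_range_add_finrank_ker
  have h2 : finrank ℚ ↥(range ψ) + finrank ℚ ↥(ker ψ)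
      = finrank ℚ ↥(range A) + finrank ℚ ↥(range B) := by
    have h := ψ.finrank_range_add_finrank_ker
    rwa [Module.finrank_prod] at h
  have hW : range A ⊔ range B ≤ range ψ := by
    apply sup_le
    · rintro a ⟨v, rfl⟩
      exact ⟨(⟨A v, mem_range_self A v⟩, 0), by simp [hψ]⟩
    · rintro b ⟨v, rfl⟩
      refine ⟨(⟨A (-(B v)), mem_range_self A _⟩, ⟨B v, mem_range_self B v⟩), ?_⟩
      simp [hψ, hA, LinearMap.sub_apply]
  have h3 : finrank ℚ ↥(range φ) ≤ finrank ℚ ↥(range C) + finrank ℚ ↥(ker ψ) := by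
    have hrn := (ψ.domRestrict (range φ)).finrank_range_add_finrank_ker
    have hrange : range (ψ.domRestrict (range φ)) = range C := by
      rw [range_domRestrict, ← range_comp, hψφ]
    set ψ' := ψ.domRestrict (range φ) with hψ'
    have hker : finrank ℚ ↥(ker ψ') ≤ finrank ℚ ↥(ker ψ) := by
      have hmem : ∀ v : ↥(ker ψ'), (((v : ↥(range φ)) : ↥(range A) × ↥(range B))) ∈ ker ψ := by
        intro v
        have hv : ψ' (v : ↥(range φ)) = 0 := v.2
        exact hv
      exact LinearMap.finrank_le_finrank_of_injective
        (f := LinearMap.codRestrict (ker ψ) (((range φ).subtype).comp (ker ψ').subtype) hmem)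
        (fun u v huv => by
          apply Subtype.ext
          apply Subtype.ext
          have := congrArg (Subtype.val) huv
          exact this)
    rw [hrange] at hrn
    omega
  have hWle : finrank ℚ ↥(range A ⊔ range B) ≤ finrank ℚ ↥(range ψ) :=
    Submodule.finrank_mono hW
  omega

lemma exists_alt_three (i j : Fin 11) (hij : i ≠ j) :
    ∃ g ∈ alternatingGroup (Fin 11), g i = j := by
  have hne : (({i, j} : Finset (Fin 11))ᶜ).Nonempty := by
    rw [← Finset.card_pos, Finset.card_compl]
    have : ({i, j} : Finset (Fin 11)).card ≤ 2 :=
      (Finset.card_insert_le _ _).trans (by simp)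
    simp only [Fintype.card_fin]
    omega
  obtain ⟨k, hk⟩ := hne
  rw [Finset.mem_compl, Finset.mem_insert, Finset.mem_singleton] at hk
  push_neg at hk
  refine ⟨Equiv.swap i j * Equiv.swap j k, ?_, ?_⟩
  · rw [Equiv.Perm.mem_alternatingGroup, map_mul, Equiv.Perm.sign_swap hij,
      Equiv.Perm.sign_swap (fun h => hk.2 h.symm)]
    norm_num
  · simp only [Equiv.Perm.coe_mul, Function.comp_apply]
    rw [Equiv.swap_apply_of_ne_of_ne hij (fun h => hk.1 h.symm), Equiv.swap_apply_left]

lemma ker_le_const {x y : Equiv.Perm (Fin 11)}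
    (hcl : Subgroup.closure {x, y} = alternatingGroup (Fin 11)) :
    (ker (Pm x - LinearMap.id) ⊓ ker (Pm y - LinearMap.id) : Submodule ℚ V11)
      ≤ Submodule.span ℚ {(fun _ => (1 : ℚ) : V11)} := by
  rintro v hv
  obtain ⟨hvx, hvy⟩ := Submodule.mem_inf.mp hv
  rw [LinearMap.mem_ker] at hvx hvy
  have hx : ∀ i, v (x⁻¹ i) = v i := by
    intro i
    have h : Pm x v = v := by
      have := hvx
      rwa [LinearMap.sub_apply, LinearMap.id_apply, sub_eq_zero] at this
    exact congrFun h i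
  have hy : ∀ i, v (y⁻¹ i) = v i := by
    intro i
    have h : Pm y v = v := by
      have := hvy
      rwa [LinearMap.sub_apply, LinearMap.id_apply, sub_eq_zero] at this
    exact congrFun h i
  let H : Subgroup (Equiv.Perm (Fin 11)) :=
  { carrier := {g | ∀ i, v (g i) = v i}
    one_mem' := fun i => rfl
    mul_mem' := by
      intro a b ha hb i
      have : (a * b) i = a (b i) := rfl
      rw [this, ha, hb]
    inv_mem' := by
      intro a ha i
      calc v (a⁻¹ i) = v (a (a⁻¹ i)) := (ha (a⁻¹ i)).symm
        _ = v i := by rw [← Equiv.Perm.mul_apply, mul_inv_cancel, Equiv.Perm.one_apply] }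
  have hxH : x ∈ H := by
    intro i
    have := hx (x i)
    rw [← Equiv.Perm.mul_apply, inv_mul_cancel, Equiv.Perm.one_apply] at this
    exact this.symm
  have hyH : y ∈ H := by
    intro i
    have := hy (y i)
    rw [← Equiv.Perm.mul_apply, inv_mul_cancel, Equiv.Perm.one_apply] at this
    exact this.symm
  have hAlt : alternatingGroup (Fin 11) ≤ H := by
    rw [← hcl]
    apply (Subgroup.closure_le H).mpr
    intro g hg
    rcases hg with hg | hg
    · rw [hg]; exact hxH
    · rw [Set.mem_singleton_iff.mp hg]; exact hyH
  have hconst : ∀ i : Fin 11, v i = v 0 := by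
    intro i
    by_cases h0 : i = (0 : Fin 11)
    · rw [h0]
    · obtain ⟨g, hg, hgi⟩ := exists_alt_three 0 i (fun h => h0 h.symm)
      have := hAlt hg 0
      rw [hgi] at this
      exact this
  rw [Submodule.mem_span_singleton]
  exact ⟨v 0, funext fun i => by rw [Pi.smul_apply]; simp [hconst i]⟩

lemma finrank_ker_inf_le {x y : Equiv.Perm (Fin 11)}
    (hcl : Subgroup.closure {x, y} = alternatingGroup (Fin 11)) :
    finrank ℚ ↥(ker (Pm x - LinearMap.id) ⊓ ker (Pm y - LinearMap.id) : Submodule ℚ V11)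
      ≤ 1 := by
  have hs : finrank ℚ ↥(Submodule.span ℚ {(fun _ => (1 : ℚ) : V11)}) = 1 := by
    apply finrank_span_singleton
    intro hcon
    have := congrFun hcon 0
    norm_num at this
  exact (Submodule.finrank_mono (ker_le_const hcl)).trans (le_of_eq hs)

lemma single_sub_mem_W {x y : Equiv.Perm (Fin 11)}
    (hcl : Subgroup.closure {x, y} = alternatingGroup (Fin 11)) (i : Fin 11) :
    (Pi.single i 1 - Pi.single 0 1 : V11)
      ∈ range (Pm x - LinearMap.id) ⊔ range (Pm y - LinearMap.id) := by
  set W := range (Pm x - LinearMap.id) ⊔ range (Pm y - LinearMap.id) with hWdef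
  have key : ∀ g : Equiv.Perm (Fin 11), (g = x ∨ g = y) → ∀ j : Fin 11,
      (Pi.single (g j) 1 - Pi.single j 1 : V11) ∈ W := by
    intro g hg j
    have hcomp : (Pm g - LinearMap.id : V11 →ₗ[ℚ] V11) ((Pi.single j 1 : V11)) =
        (Pi.single (g j) 1 - Pi.single j 1 : V11) := by
      rw [LinearMap.sub_apply, LinearMap.id_apply]
      congr 1
      funext i'
      have hl : (Pm g) (Pi.single j 1 : V11) i' = (Pi.single j 1 : V11) (g⁻¹ i') := rfl
      rw [hl, Pi.single_apply, Pi.single_apply]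
      have : (g⁻¹ i' = j) = (i' = g j) := by
        apply propext
        constructor
        · intro h; rw [← h, ← Equiv.Perm.mul_apply, mul_inv_cancel, Equiv.Perm.one_apply]
        · intro h; rw [h, ← Equiv.Perm.mul_apply, inv_mul_cancel, Equiv.Perm.one_apply]
      simp only [this]
    rcases hg with hg | hg
    · rw [← hcomp, hg]
      exact Submodule.mem_sup_left (LinearMap.mem_range_self _ _)
    · rw [← hcomp, hg]
      exact Submodule.mem_sup_right (LinearMap.mem_range_self _ _)
  let H : Subgroup (Equiv.Perm (Fin 11)) :=
  { carrier := {g | ∀ j : Fin 11, (Pi.single (g j) 1 - Pi.single j 1 : V11) ∈ W}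
    one_mem' := by intro j; simp
    mul_mem' := by
      intro a b ha hb j
      have h1 : (a * b) j = a (b j) := rfl
      rw [h1, ← sub_add_sub_cancel _ (Pi.single (b j) 1 : V11) _]
      exact Submodule.add_mem _ (ha (b j)) (hb j)
    inv_mem' := by
      intro a ha j
      have := ha (a⁻¹ j)
      rw [← Equiv.Perm.mul_apply, mul_inv_cancel, Equiv.Perm.one_apply] at this
      have h2 := Submodule.neg_mem _ this
      rw [neg_sub] at h2
      exact h2 }
  have hxH : x ∈ H := key x (Or.inl rfl)
  have hyH : y ∈ H := key y (Or.inr rfl)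

  have hAlt : alternatingGroup (Fin 11) ≤ H := by
    rw [← hcl]
    apply (Subgroup.closure_le H).mpr
    intro g hg
    rcases hg with hg | hg
    · rw [hg]; exact hxH
    · rw [Set.mem_singleton_iff.mp hg]; exact hyH
  by_cases h0 : i = (0 : Fin 11)
  · rw [h0, sub_self]
    exact Submodule.zero_mem _
  · obtain ⟨g, hg, hgi⟩ := exists_alt_three 0 i (fun h => h0 h.symm)
    have := hAlt hg 0
    rwa [hgi] at this

lemma finrank_W_ge {x y : Equiv.Perm (Fin 11)}
    (hcl : Subgroup.closure {x, y} = alternatingGroup (Fin 11)) :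
    10 ≤ finrank ℚ
      ↥(range (Pm x - LinearMap.id) ⊔ range (Pm y - LinearMap.id) : Submodule ℚ V11) := by
  classical
  set f : Fin 10 → V11 := fun k => Pi.single k.succ 1 - Pi.single 0 1 with hf
  have hli : LinearIndependent ℚ f := by
    apply linIndep_eval f (fun k => k.succ)
    · intro k
      rw [hf]
      simp only [Pi.sub_apply]
      rw [Pi.single_eq_same, Pi.single_eq_of_ne (Fin.succ_ne_zero k)]
      norm_num
    · intro k j hkj
      rw [hf]
      simp only [Pi.sub_apply]
      rw [Pi.single_eq_of_ne (fun h => hkj (Fin.succ_injective _ h).symm),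
        Pi.single_eq_of_ne (Fin.succ_ne_zero j)]
      norm_num
  have hspan : Submodule.span ℚ (Set.range f)
      ≤ range (Pm x - LinearMap.id) ⊔ range (Pm y - LinearMap.id) := by
    rw [Submodule.span_le]
    rintro _ ⟨k, rfl⟩
    exact single_sub_mem_W hcl k.succ
  calc (10 : ℕ) = Fintype.card (Fin 10) := by simp
    _ = finrank ℚ ↥(Submodule.span ℚ (Set.range f)) := (finrank_span_eq_card hli).symm
    _ ≤ _ := Submodule.finrank_mono hspan

/-- the main rank inequality from generation -/
lemma main_rank_bound {x y : Equiv.Perm (Fin 11)}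
    (hcl : Subgroup.closure {x, y} = alternatingGroup (Fin 11)) :
    20 ≤ finrank ℚ ↥(range (Pm x - LinearMap.id)) + finrank ℚ ↥(range (Pm y - LinearMap.id)) +
      finrank ℚ ↥(range (Pm (x * y) - LinearMap.id)) := by
  have hs := scott_ineq (Pm x) (Pm y)
  rw [← Pm_mul] at hs
  have hK := finrank_ker_inf_le hcl
  have hW := finrank_W_ge hcl
  have hV : finrank ℚ V11 = 11 := Module.finrank_fin_fun ℚ
  omega

end Alt11NotGen

namespace Alt11NotGen

open Equiv Equiv.Perm LinearMap Module

lemma even_of_alt {σ : Equiv.Perm (Fin 11)} (h : σ ∈ alternatingGroup (Fin 11)) :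
    Even (σ.cycleType.sum + Multiset.card σ.cycleType) := by
  have hs := Equiv.Perm.sign_of_cycleType σ
  rw [Equiv.Perm.mem_alternatingGroup.mp h] at hs
  exact (neg_one_pow_eq_one_iff_even (R := ℤˣ) (by decide)).mp hs.symm

lemma sum_le_11 (σ : Equiv.Perm (Fin 11)) : σ.cycleType.sum ≤ 11 := by
  rw [Equiv.Perm.sum_cycleType]
  have := Finset.card_le_univ σ.support
  simpa using this

lemma dvd_of_mem_cycleType {σ : Equiv.Perm (Fin 11)} {d l : ℕ} (hσ : σ ^ d = 1)
    (hl : l ∈ σ.cycleType) : l ∣ d :=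
  (Multiset.dvd_lcm hl).trans
    (by rw [Equiv.Perm.lcm_cycleType]; exact orderOf_dvd_of_pow_eq_one hσ)

lemma tOrb_arith (σ : Equiv.Perm (Fin 11)) :
    tOrb σ = Multiset.card σ.cycleType + (11 - σ.cycleType.sum) := by
  rw [tOrb, Equiv.Perm.sum_cycleType]

lemma tOrb_ge_two {σ : Equiv.Perm (Fin 11)} (hσ : σ ^ 2 = 1)
    (halt : σ ∈ alternatingGroup (Fin 11)) : 7 ≤ tOrb σ := by
  have h2 : ∀ l ∈ σ.cycleType, l = 2 := fun l hl =>
    le_antisymm (Nat.le_of_dvd (by norm_num) (dvd_of_mem_cycleType hσ hl))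
      (Equiv.Perm.two_le_of_mem_cycleType hl)
  have hsum : σ.cycleType.sum = 2 * Multiset.card σ.cycleType := by
    conv_lhs => rw [Multiset.eq_replicate_card.mpr h2]
    rw [Multiset.sum_replicate, smul_eq_mul, mul_comm]
  have hs11 := sum_le_11 σ
  obtain ⟨k, hk⟩ := even_of_alt halt
  rw [tOrb_arith σ]
  omega

lemma tOrb_ge_three {σ : Equiv.Perm (Fin 11)} (hσ : σ ^ 3 = 1) : 5 ≤ tOrb σ := by
  have h3 : ∀ l ∈ σ.cycleType, l = 3 := by
    intro l hl
    have hd := dvd_of_mem_cycleType hσ hl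
    have h1 := Equiv.Perm.two_le_of_mem_cycleType hl
    have h2 := Nat.le_of_dvd (by norm_num) hd
    interval_cases l
    · exfalso; revert hd; decide
    · rfl
  have hsum : σ.cycleType.sum = 3 * Multiset.card σ.cycleType := by
    conv_lhs => rw [Multiset.eq_replicate_card.mpr h3]
    rw [Multiset.sum_replicate, smul_eq_mul, mul_comm]
  have hs11 := sum_le_11 σ
  rw [tOrb_arith σ]
  omega

lemma tOrb_ge_four {σ : Equiv.Perm (Fin 11)} (hσ : σ ^ 4 = 1)
    (halt : σ ∈ alternatingGroup (Fin 11)) : 5 ≤ tOrb σ := by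
  have hfacts : ∀ l ∈ σ.cycleType, 2 ≤ l ∧ l ≤ 4 ∧ 2 ∣ l := by
    intro l hl
    have hd := dvd_of_mem_cycleType hσ hl
    have h1 := Equiv.Perm.two_le_of_mem_cycleType hl
    have h2 := Nat.le_of_dvd (by norm_num) hd
    refine ⟨h1, h2, ?_⟩
    interval_cases l
    · exact dvd_refl 2
    · exfalso; revert hd; decide
    · exact ⟨2, rfl⟩
  have hlo : Multiset.card σ.cycleType • 2 ≤ σ.cycleType.sum :=
    Multiset.card_nsmul_le_sum (fun l hl => (hfacts l hl).1)
  have hhi : σ.cycleType.sum ≤ Multiset.card σ.cycleType • 4 :=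
    Multiset.sum_le_card_nsmul _ _ (fun l hl => (hfacts l hl).2.1)
  have heven : 2 ∣ σ.cycleType.sum := Multiset.dvd_sum (fun l hl => (hfacts l hl).2.2)
  rw [smul_eq_mul] at hlo
  rw [smul_eq_mul] at hhi
  have hs11 := sum_le_11 σ
  obtain ⟨k, hk⟩ := even_of_alt halt
  obtain ⟨k2, hk2⟩ := heven
  rw [tOrb_arith σ]
  omega

lemma tOrb_ge_five {σ : Equiv.Perm (Fin 11)} (hσ : σ ^ 5 = 1) : 3 ≤ tOrb σ := by
  have h5 : ∀ l ∈ σ.cycleType, l = 5 := by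
    intro l hl
    have hd := dvd_of_mem_cycleType hσ hl
    have h1 := Equiv.Perm.two_le_of_mem_cycleType hl
    have h2 := Nat.le_of_dvd (by norm_num) hd
    interval_cases l
    · exfalso; revert hd; decide
    · exfalso; revert hd; decide
    · exfalso; revert hd; decide
    · rfl
  have hsum : σ.cycleType.sum = 5 * Multiset.card σ.cycleType := by
    conv_lhs => rw [Multiset.eq_replicate_card.mpr h5]
    rw [Multiset.sum_replicate, smul_eq_mul, mul_comm]
  have hs11 := sum_le_11 σ
  rw [tOrb_arith σ]
  omega

lemma tOrb_ge_gen {σ : Equiv.Perm (Fin 11)} {c : ℕ} (hσ : σ ^ c = 1) (hc : ¬ (11 ∣ c))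
    (halt : σ ∈ alternatingGroup (Fin 11)) : 3 ≤ tOrb σ := by
  have hs11 := sum_le_11 σ
  have hfacts : ∀ l ∈ σ.cycleType, 2 ≤ l ∧ l ≤ 10 := by
    intro l hl
    have hd := dvd_of_mem_cycleType hσ hl
    have h1 := Equiv.Perm.two_le_of_mem_cycleType hl
    have hls : l ≤ σ.cycleType.sum :=
      Multiset.single_le_sum (fun x _ => Nat.zero_le x) l hl
    have hne : l ≠ 11 := by
      intro h
      exact hc (h ▸ hd)
    exact ⟨h1, by omega⟩
  have hlo : Multiset.card σ.cycleType • 2 ≤ σ.cycleType.sum :=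
    Multiset.card_nsmul_le_sum (fun l hl => (hfacts l hl).1)
  have hhi : σ.cycleType.sum ≤ Multiset.card σ.cycleType • 10 :=
    Multiset.sum_le_card_nsmul _ _ (fun l hl => (hfacts l hl).2)
  rw [smul_eq_mul] at hlo
  rw [smul_eq_mul] at hhi
  obtain ⟨k, hk⟩ := even_of_alt halt
  rw [tOrb_arith σ]
  omega

end Alt11NotGen

/-- `Alt_m` is `(a,b,c)`-generated: there exist `x, y ∈ Alt_m` with
`x^a = y^b = (xy)^c = 1` generating the alternating group; equivalently `Alt_m` is a
quotient of the triangle group `T_{a,b,c}`. -/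
def AltIsGenerated (m a b c : ℕ) : Prop :=
  ∃ x y : Equiv.Perm (Fin m),
    x ∈ alternatingGroup (Fin m) ∧ y ∈ alternatingGroup (Fin m) ∧
    x ^ a = 1 ∧ y ^ b = 1 ∧ (x * y) ^ c = 1 ∧
    Subgroup.closure {x, y} = alternatingGroup (Fin m)

/-- `Alt_11` is not `(2,3,c)`-generated for `c ≥ 7` with `11 ∤ c`, and not `(2,4,5)`- nor
`(3,3,4)`-generated. -/
theorem alt11_not_generated :
    (∀ c : ℕ, 7 ≤ c → ¬ (11 ∣ c) → ¬ AltIsGenerated 11 2 3 c) ∧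
    ¬ AltIsGenerated 11 2 4 5 ∧
    ¬ AltIsGenerated 11 3 3 4 := by
  refine ⟨?_, ?_, ?_⟩
  · rintro c _ hc11 ⟨x, y, hx, hy, hx2, hy3, hxyc, hcl⟩
    have h20 := Alt11NotGen.main_rank_bound hcl
    have b1 := Alt11NotGen.finrank_range_le x
    have b2 := Alt11NotGen.finrank_range_le y
    have b3 := Alt11NotGen.finrank_range_le (x * y)
    have t1 := Alt11NotGen.tOrb_ge_two hx2 hx
    have t2 := Alt11NotGen.tOrb_ge_three hy3
    have t3 := Alt11NotGen.tOrb_ge_gen hxyc hc11 (mul_mem hx hy)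
    omega
  · rintro ⟨x, y, hx, hy, hx2, hy4, hxy5, hcl⟩
    have h20 := Alt11NotGen.main_rank_bound hcl
    have b1 := Alt11NotGen.finrank_range_le x
    have b2 := Alt11NotGen.finrank_range_le y
    have b3 := Alt11NotGen.finrank_range_le (x * y)
    have t1 := Alt11NotGen.tOrb_ge_two hx2 hx
    have t2 := Alt11NotGen.tOrb_ge_four hy4 hy
    have t3 := Alt11NotGen.tOrb_ge_five hxy5
    omega
  · rintro ⟨x, y, hx, hy, hx3, hy3, hxy4, hcl⟩
    have h20 := Alt11NotGen.main_rank_bound hcl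
    have b1 := Alt11NotGen.finrank_range_le x
    have b2 := Alt11NotGen.finrank_range_le y
    have b3 := Alt11NotGen.finrank_range_le (x * y)
    have t1 := Alt11NotGen.tOrb_ge_three hx3
    have t2 := Alt11NotGen.tOrb_ge_three hy3
    have t3 := Alt11NotGen.tOrb_ge_four hxy4 (mul_mem hx hy)
    omega
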